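/- Let t ≥ 1, w ≥ 2 be integers and F a graph with ω(F) ≤ w. Let A ⊆ V(F) with |A| ≥ w^{t+2} and B ⊆ V(F) \ A. Then for every q ≥ 1, either (a) there are X ⊆ A and Y ⊆ B with ω(F[X]) + ω(F[Y]) ≤ ω(F), |A \ X| < w^{t+2}, and χ(B \ Y) < q; or (b) there is an anticomplete pair (P,Q) with P ⊆ A, Q ⊆ B, P a stable set of size t, and χ(Q) ≥ w^{-t(t+2)}·q. -/

import Mathlib

set_option linter.unusedSectionVars false
set_option linter.unusedTactic false
set_option linter.unreachableTactic false
set_option linter.unnecessarySeqFocus false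
set_option maxHeartbeats 1000000

open SimpleGraph

/-- The chromatic number of the subgraph of `G` induced on `S`, as a natural number. -/
noncomputable def chiSet {V : Type*} (G : SimpleGraph V) (S : Set V) : ℕ :=
  (G.induce S).chromaticNumber.toNat

/-- The chromatic number of `G`, as a natural number. -/
noncomputable def chi {V : Type*} (G : SimpleGraph V) : ℕ :=
  G.chromaticNumber.toNat

/-- `(A, B)` is an anticomplete pair: no edge of `G` joins `A` and `B`. -/
def Anticomplete {V : Type*} (G : SimpleGraph V) (A B : Set V) : Prop :=
  ∀ a ∈ A, ∀ b ∈ B, ¬ G.Adj a b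

/-- `G` is `H`-free: no induced subgraph of `G` is isomorphic to `H`. -/
def FreeOf {V W : Type*} (G : SimpleGraph V) (H : SimpleGraph W) : Prop :=
  IsEmpty (H ↪g G)

namespace Stmt14Aux

lemma setFinite {V : Type*} [Fintype V] (s : Set V) : s.Finite :=
  Set.finite_univ.subset (Set.subset_univ s)

section Aux
variable {V : Type*} [Fintype V] {F : SimpleGraph V}

lemma card_le_cliqueNum_induce {S : Set V} {K : Finset V} (hKS : ↑K ⊆ S)
    (hK : F.IsClique (K : Set V)) : K.card ≤ (F.induce S).cliqueNum := by
  classical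
  haveI : Fintype S := Fintype.ofFinite _
  let K' : Finset S := K.attach.map
    ⟨fun x => (⟨x.1, hKS (Finset.mem_coe.mpr x.2)⟩ : S),
     by intro a b h; ext; have h' := congrArg Subtype.val h; exact h'⟩
  have hcard : K'.card = K.card := by simp [K']
  have hK' : (F.induce S).IsClique (K' : Set S) := by
    intro x hx y hy hne
    simp only [K', Finset.coe_map, Set.mem_image, Finset.mem_coe, Finset.mem_attach,
      Function.Embedding.coeFn_mk, true_and] at hx hy
    obtain ⟨a, _, rfl⟩ := hx
    obtain ⟨b, _, rfl⟩ := hy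
    have hab : (a : V) ≠ (b : V) := fun h => hne (by simp [Subtype.ext_iff, h])
    exact hK (Finset.mem_coe.mpr a.2) (Finset.mem_coe.mpr b.2) hab
  calc K.card = K'.card := hcard.symm
    _ ≤ (F.induce S).cliqueNum := IsClique.card_le_cliqueNum (tc := hK')

lemma exists_maxClique (S : Set V) : ∃ K : Finset V, ↑K ⊆ S ∧ F.IsClique (K : Set V) ∧
    K.card = (F.induce S).cliqueNum := by
  classical
  haveI : Fintype S := Fintype.ofFinite _
  obtain ⟨s, hs⟩ := (F.induce S).exists_isNClique_cliqueNum
  refine ⟨s.map ⟨Subtype.val, Subtype.val_injective⟩, ?_, ?_, ?_⟩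
  · intro x hx
    simp only [Finset.coe_map, Set.mem_image, Finset.mem_coe] at hx
    obtain ⟨y, _, rfl⟩ := hx
    exact y.2
  · intro x hx y hy hne
    simp only [Finset.coe_map, Set.mem_image, Finset.mem_coe,
      Function.Embedding.coeFn_mk] at hx hy
    obtain ⟨a, ha, rfl⟩ := hx
    obtain ⟨b, hb, rfl⟩ := hy
    have : a ≠ b := fun h => hne (by rw [h])
    exact hs.isClique (Finset.mem_coe.mpr ha) (Finset.mem_coe.mpr hb) this
  · rw [Finset.card_map]; exact hs.card_eq

lemma cliqueNum_induce_mono {S T : Set V} (h : S ⊆ T) :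
    (F.induce S).cliqueNum ≤ (F.induce T).cliqueNum := by
  obtain ⟨K, hKS, hK, hcard⟩ := exists_maxClique (F := F) S
  rw [← hcard]
  exact card_le_cliqueNum_induce (hKS.trans h) hK

lemma cliqueNum_induce_le (S : Set V) : (F.induce S).cliqueNum ≤ F.cliqueNum := by
  obtain ⟨K, hKS, hK, hcard⟩ := exists_maxClique (F := F) S
  rw [← hcard]
  exact IsClique.card_le_cliqueNum (tc := hK)

end Aux

section Aux2
variable {V : Type*} [Fintype V] {F : SimpleGraph V}

lemma colorable_chiSet (S : Set V) : (F.induce S).Colorable (chiSet F S) :=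
  colorable_chromaticNumber_of_fintype _

lemma chiSet_le_of_colorable {S : Set V} {n : ℕ} (h : (F.induce S).Colorable n) :
    chiSet F S ≤ n := by
  have h2 := h.chromaticNumber_le
  unfold chiSet
  exact ENat.toNat_le_of_le_coe h2

lemma chiSet_mono {S T : Set V} (h : S ⊆ T) : chiSet F S ≤ chiSet F T := by
  apply chiSet_le_of_colorable
  have emb : F.induce S ↪g F.induce T :=
    ⟨⟨Set.inclusion h, Set.inclusion_injective h⟩, by intro a b; simp [SimpleGraph.induce]⟩
  exact Colorable.of_hom emb.toHom (colorable_chiSet T)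

lemma chiSet_empty : chiSet F (∅ : Set V) = 0 := by
  have : (F.induce (∅ : Set V)).Colorable 0 := SimpleGraph.Colorable.of_isEmpty (G := F.induce (∅ : Set V)) 0
  exact Nat.le_zero.mp (chiSet_le_of_colorable this)

lemma chiSet_union_le (S T : Set V) : chiSet F (S ∪ T) ≤ chiSet F S + chiSet F T := by
  classical
  obtain ⟨c1⟩ := colorable_chiSet (F := F) S
  obtain ⟨c2⟩ := colorable_chiSet (F := F) T
  set m := chiSet F S
  set n := chiSet F T
  have : (F.induce (S ∪ T)).Colorable (m + n) := by
    have col : (F.induce (S ∪ T)).Coloring (Fin m ⊕ Fin n) := by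
      refine Coloring.mk (fun v => if h : v.1 ∈ S then Sum.inl (c1 ⟨v.1, h⟩)
        else Sum.inr (c2 ⟨v.1, v.2.resolve_left h⟩)) ?_
      intro u v hadj
      have hadj' : F.Adj u.1 v.1 := hadj
      by_cases hu : u.1 ∈ S <;> by_cases hv : v.1 ∈ S <;> simp [hu, hv]
      · exact c1.valid hadj'
      · exact c2.valid hadj'
    simpa using col.colorable
  exact chiSet_le_of_colorable this

lemma chiSet_biUnion_le {ι : Type*} (P : Finset ι) (Q : ι → Set V) :
    chiSet F (⋃ i ∈ P, Q i) ≤ ∑ i ∈ P, chiSet F (Q i) := by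
  classical
  induction P using Finset.induction_on with
  | empty => simpa using le_of_eq (chiSet_empty (F := F))
  | insert a s hx ih =>
      rw [Finset.set_biUnion_insert, Finset.sum_insert hx]
      exact (chiSet_union_le _ _).trans (Nat.add_le_add_left ih _)
end Aux2

lemma nat_choose_le_pow : ∀ k n : ℕ, Nat.choose n k ≤ n ^ k := by
  intro k
  induction k with
  | zero => intro n; simp
  | succ k ih =>
      intro n
      cases n with
      | zero => simp [Nat.choose_zero_succ]
      | succ n =>
          have h1 : Nat.choose (n+1) (k+1) ≤ (n+1) * Nat.choose n k := by
            have h2 := Nat.add_one_mul_choose_eq n k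
            calc Nat.choose (n+1) (k+1) ≤ Nat.choose (n+1) (k+1) * (k+1) :=
                  Nat.le_mul_of_pos_right _ (Nat.succ_pos k)
              _ = (n+1) * Nat.choose n k := by rw [← h2]
          calc Nat.choose (n+1) (k+1) ≤ (n+1) * Nat.choose n k := h1
            _ ≤ (n+1) * n ^ k := Nat.mul_le_mul_left _ (ih n)
            _ ≤ (n+1) * (n+1) ^ k :=
                Nat.mul_le_mul_left _ (Nat.pow_le_pow_left (Nat.le_succ n) k)
            _ = (n+1) ^ (k+1) := by ring

lemma choose_add_le_pow : ∀ n m u : ℕ, 1 ≤ m → u + m = n →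
    Nat.choose (u + m) m ≤ (m + 1) ^ u := by
  intro n
  induction n using Nat.strong_induction_on with
  | _ n ih =>
      intro m u hm hn
      match u, m, hm with
      | 0, m, _ => simp
      | u'+1, 1, _ =>
          rw [Nat.choose_one_right]
          have := Nat.lt_two_pow_self (n := u' + 1)
          norm_num
          omega
      | u'+1, m''+2, _ =>
          have hpas : Nat.choose (u'+1 + (m''+2)) (m''+2)
              = Nat.choose (u'+1+m''+1) (m''+1) + Nat.choose (u'+1+m''+1) (m''+2) := by
            have := Nat.choose_succ_succ (u'+1+m''+1) (m''+1)
            convert this using 2 <;> omega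
          have h1 : Nat.choose (u'+1+m''+1) (m''+1) ≤ (m''+2) ^ (u'+1) := by
            have := ih (u'+1+m''+1) (by omega) (m''+1) (u'+1) (by omega) (by omega)
            convert this using 2 <;> omega
          have h2 : Nat.choose (u'+1+m''+1) (m''+2) ≤ (m''+3) ^ u' := by
            have := ih (u'+m''+2) (by omega) (m''+2) u' (by omega) (by omega)
            convert this using 2 <;> omega
          have h3 : (m''+2) ^ (u'+1) ≤ (m''+2) * (m''+3) ^ u' := by
            rw [pow_succ]
            calc (m''+2) ^ u' * (m''+2) = (m''+2) * (m''+2) ^ u' := by ring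
              _ ≤ (m''+2) * (m''+3) ^ u' :=
                Nat.mul_le_mul_left _ (Nat.pow_le_pow_left (by omega) u')
          calc Nat.choose (u'+1 + (m''+2)) (m''+2)
              = Nat.choose (u'+1+m''+1) (m''+1) + Nat.choose (u'+1+m''+1) (m''+2) := hpas
            _ ≤ (m''+2) * (m''+3) ^ u' + (m''+3) ^ u' := by
                have := h1.trans h3; omega
            _ = (m''+3) ^ (u'+1) := by ring

lemma rho_bound : ∀ tt w : ℕ, 2 ≤ w → Nat.choose (tt + w) w + 1 ≤ 2 * w ^ tt := by
  intro tt
  induction tt with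
  | zero => intro w hw; simp [Nat.choose_self]
  | succ tt ih =>
      intro w hw
      obtain ⟨w'', rfl⟩ : ∃ w'', w = w'' + 1 := ⟨w - 1, by omega⟩
      have hw'' : 1 ≤ w'' := by omega
      have hpas : Nat.choose (tt + 1 + (w''+1)) (w''+1)
          = Nat.choose (tt + w'' + 1) w'' + Nat.choose (tt + w'' + 1) (w''+1) := by
        have := Nat.choose_succ_succ (tt + w'' + 1) w''
        convert this using 2 <;> omega
      have h1 : Nat.choose (tt + w'' + 1) w'' ≤ (w'' + 1) ^ (tt + 1) := by
        have h1' := choose_add_le_pow (tt + 1 + w'') w'' (tt + 1) hw'' rfl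
        convert h1' using 2
        omega
      have h2 : Nat.choose (tt + w'' + 1) (w''+1) + 1 ≤ 2 * (w''+1) ^ tt := by
        have := ih (w''+1) hw
        convert this using 3 <;> omega
      have h3 : 2 * (w''+1) ^ tt ≤ (w''+1) ^ (tt+1) := by
        rw [pow_succ]
        calc 2 * (w''+1) ^ tt = (w''+1) ^ tt * 2 := by ring
          _ ≤ (w''+1) ^ tt * (w''+1) := Nat.mul_le_mul_left _ (by omega)
      calc Nat.choose (tt + 1 + (w''+1)) (w''+1) + 1
          = Nat.choose (tt + w'' + 1) w'' + (Nat.choose (tt + w'' + 1) (w''+1) + 1) := by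
            rw [hpas]; ring
        _ ≤ (w''+1) ^ (tt+1) + 2 * (w''+1) ^ tt := Nat.add_le_add h1 h2
        _ ≤ (w''+1) ^ (tt+1) + (w''+1) ^ (tt+1) := Nat.add_le_add_left h3 _
        _ = 2 * (w''+1) ^ (tt+1) := by ring

variable {V : Type*} [Fintype V] {F : SimpleGraph V}

lemma es_ramsey : ∀ (n a tt : ℕ) (S : Finset V), tt + a = n →
    (∀ K : Finset V, K ⊆ S → F.IsClique (K : Set V) → K.card ≤ a) →
    Nat.choose (tt + a) a ≤ S.card →
    ∃ P : Finset V, P ⊆ S ∧ P.card = tt + 1 ∧ ∀ u ∈ P, ∀ v ∈ P, ¬ F.Adj u v := by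
  classical
  intro n
  induction n using Nat.strong_induction_on with
  | _ n ih =>
    intro a tt S hn hcl hcard
    have hSne : S.Nonempty := by
      rw [← Finset.card_pos]
      exact lt_of_lt_of_le (Nat.choose_pos (Nat.le_add_left a tt)) hcard
    obtain ⟨v, hv⟩ := hSne
    match a, tt with
    | 0, tt =>
        exfalso
        have h1 : ({v} : Finset V).card ≤ 0 := by
          apply hcl {v} (Finset.singleton_subset_iff.mpr hv)
          simp [SimpleGraph.isClique_singleton]
        simp at h1
    | a'+1, 0 =>
        refine ⟨{v}, Finset.singleton_subset_iff.mpr hv, by simp, ?_⟩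
        intro u hu x hx
        simp only [Finset.mem_singleton] at hu hx
        subst hu; subst hx
        exact F.irrefl
    | a'+1, tt'+1 =>
        set a := a' + 1
        set tt := tt' + 1
        set S' := S.erase v with hS'def
        set NB := S'.filter (fun x => F.Adj v x) with hNBdef
        set MB := S'.filter (fun x => ¬ F.Adj v x) with hMBdef
        have hsplit : NB.card + MB.card = S'.card :=
          Finset.card_filter_add_card_filter_not _
        have hS'card : S'.card = S.card - 1 := Finset.card_erase_of_mem hv
        have hpas : Nat.choose (tt + a) a
            = Nat.choose (tt + a') a' + Nat.choose (tt' + a) a := by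
          have h1 : tt + a = (tt' + a) + 1 := by omega
          have h2 : tt + a' = tt' + a := by omega
          rw [h1, h2]
          exact Nat.choose_succ_succ (tt' + a) a'
        by_cases hN : Nat.choose (tt + a') a' ≤ NB.card
        · have hcl' : ∀ K : Finset V, K ⊆ NB → F.IsClique (K : Set V) → K.card ≤ a' := by
            intro K hK hKc
            have hvK : v ∉ K := by
              intro hvk
              have := hK hvk
              rw [hNBdef] at this
              exact Finset.notMem_erase v S (Finset.mem_of_mem_filter _ this)
            have hins : F.IsClique ((insert v K : Finset V) : Set V) := by
              rw [Finset.coe_insert]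
              apply hKc.insert
              intro b hb _
              have := hK hb
              rw [hNBdef, Finset.mem_filter] at this
              exact this.2
            have hsub : insert v K ⊆ S := by
              intro x hx
              rcases Finset.mem_insert.mp hx with rfl | hx
              · exact hv
              · exact (Finset.erase_subset v S) (Finset.filter_subset _ _ (hK hx))
            have := hcl (insert v K) hsub hins
            rw [Finset.card_insert_of_notMem hvK] at this
            omega
          obtain ⟨P, hPsub, hPcard, hPstab⟩ :=
            ih (tt + a') (by omega) a' tt NB rfl hcl' hN
          exact ⟨P, hPsub.trans ((Finset.filter_subset _ _).trans (Finset.erase_subset v S)),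
            hPcard, hPstab⟩
        · have hM : Nat.choose (tt' + a) a ≤ MB.card := by
            rw [hpas] at hcard
            omega
          have hcl' : ∀ K : Finset V, K ⊆ MB → F.IsClique (K : Set V) → K.card ≤ a := by
            intro K hK hKc
            exact hcl K (hK.trans ((Finset.filter_subset _ _).trans (Finset.erase_subset v S))) hKc
          obtain ⟨P', hPsub, hPcard, hPstab⟩ :=
            ih (tt' + a) (by omega) a tt' MB rfl hcl' hM
          have hvP' : v ∉ P' := by
            intro hvp
            have := hPsub hvp
            rw [hMBdef] at this
            exact Finset.notMem_erase v S (Finset.mem_of_mem_filter _ this)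
          have hnonadj : ∀ x ∈ P', ¬ F.Adj v x := by
            intro x hx
            have := hPsub hx
            rw [hMBdef, Finset.mem_filter] at this
            exact this.2
          refine ⟨insert v P', ?_, ?_, ?_⟩
          · intro x hx
            rcases Finset.mem_insert.mp hx with rfl | hx
            · exact hv
            · exact (Finset.erase_subset v S) (Finset.filter_subset _ _ (hPsub hx))
          · rw [Finset.card_insert_of_notMem hvP', hPcard]
          · intro u hu x hx
            rcases Finset.mem_insert.mp hu with hu' | hu' <;>
              rcases Finset.mem_insert.mp hx with hx' | hx'
            · rw [hu', hx']; exact F.irrefl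
            · rw [hu']; exact hnonadj x hx'
            · rw [hx']; exact fun h => hnonadj u hu' h.symm
            · exact hPstab u hu' x hx'


end Stmt14Aux

open Stmt14Aux

theorem stmt_14 {V : Type*} [Fintype V] (t w q : ℕ) (ht : 1 ≤ t) (hw : 2 ≤ w)
    (hq : 1 ≤ q) (F : SimpleGraph V) (hclique : F.cliqueNum ≤ w)
    (A B : Set V) (hA : w ^ (t + 2) ≤ A.ncard) (hB : B ⊆ Aᶜ) :
    (∃ X Y : Set V, X ⊆ A ∧ Y ⊆ B ∧
        (F.induce X).cliqueNum + (F.induce Y).cliqueNum ≤ F.cliqueNum ∧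
        (A \ X).ncard < w ^ (t + 2) ∧ chiSet F (B \ Y) < q) ∨
      (∃ P Q : Set V, P ⊆ A ∧ Q ⊆ B ∧ (∀ u ∈ P, ∀ v ∈ P, ¬ F.Adj u v) ∧
        P.ncard = t ∧ Anticomplete F P Q ∧ q ≤ chiSet F Q * w ^ (t * (t + 2))) := by
  classical
  set N := w ^ (t + 2) with hN
  obtain ⟨tt, htt⟩ : ∃ tt, t = tt + 1 := ⟨t - 1, by omega⟩
  have mclspec := fun X : Set V => exists_maxClique (F := F) X
  choose mcl hmclsub hmclclique hmclcard using mclspec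
  have hmclw : ∀ X : Set V, (mcl X).card ≤ w :=
    fun X => le_trans (IsClique.card_le_cliqueNum (tc := hmclclique X)) hclique
  let Xf : ℕ → Set V := fun s => Nat.rec A (fun _ Xp => Xp \ ↑(mcl Xp)) s
  have hXfsucc : ∀ s, Xf (s+1) = Xf s \ ↑(mcl (Xf s)) := fun s => rfl
  have hXfstep : ∀ s, Xf (s+1) ⊆ Xf s := fun s => by
    rw [hXfsucc]; exact Set.diff_subset
  have hXfA : ∀ s, Xf s ⊆ A := by
    intro s; induction s with
    | zero => exact fun x hx => hx
    | succ s ih => exact (hXfstep s).trans ih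
  have hXfanti : ∀ s s', s ≤ s' → Xf s' ⊆ Xf s := by
    intro s s' h
    induction s' with
    | zero =>
        have h0 : s = 0 := by omega
        subst h0; exact fun x hx => hx
    | succ s' ih =>
        rcases Nat.eq_or_lt_of_le h with rfl | hlt
        · exact fun x hx => hx
        · exact (hXfstep s').trans (ih (by omega))
  have hSSsucc : ∀ s, (A \ Xf (s+1)).ncard = (A \ Xf s).ncard + (mcl (Xf s)).card := by
    intro s
    have hsub : ↑(mcl (Xf s)) ⊆ Xf s := hmclsub _
    have hset : A \ Xf (s+1) = (A \ Xf s) ∪ ↑(mcl (Xf s)) := by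
      rw [hXfsucc]
      ext x
      simp only [Set.mem_diff, Set.mem_union, Finset.mem_coe]
      constructor
      · rintro ⟨hxA, hx⟩
        rcases Classical.em (x ∈ Xf s) with hxX | hxX
        · right
          by_contra hxm
          exact hx ⟨hxX, hxm⟩
        · left; exact ⟨hxA, hxX⟩
      · rintro (⟨hxA, hxX⟩ | hxm)
        · exact ⟨hxA, fun hh => hxX hh.1⟩
        · exact ⟨hXfA s (hsub hxm), fun hh => hh.2 hxm⟩
    have hdis : Disjoint (A \ Xf s) (↑(mcl (Xf s)) : Set V) := by
      refine Set.disjoint_left.mpr ?_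
      rintro x ⟨hxA, hxX⟩ hxm
      exact hxX (hsub hxm)
    have hfin1 : (A \ Xf s).Finite := setFinite _
    have hfin2 : ((mcl (Xf s) : Finset V) : Set V).Finite := (mcl (Xf s)).finite_toSet
    rw [hset, Set.ncard_union_eq hdis hfin1 hfin2, Set.ncard_coe_finset]
  have hmcl1 : ∀ s, (Xf s).Nonempty → 1 ≤ (mcl (Xf s)).card := by
    rintro s ⟨v, hv⟩
    have h1 : ({v} : Finset V).card ≤ (F.induce (Xf s)).cliqueNum := by
      apply card_le_cliqueNum_induce (by simpa using hv)
      simp [SimpleGraph.isClique_singleton]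
    rw [← hmclcard] at h1
    simpa using h1
  have hNexists : ∃ s, N - w ≤ (A \ Xf s).ncard := by
    have key : ∀ s : ℕ, (∃ s', N - w ≤ (A \ Xf s').ncard) ∨ s ≤ (A \ Xf s).ncard := by
      intro s
      induction s with
      | zero => right; exact Nat.zero_le _
      | succ s ih =>
          rcases ih with h | h
          · left; exact h
          · by_cases hP : N - w ≤ (A \ Xf s).ncard
            · left; exact ⟨s, hP⟩
            · right
              have hne : (Xf s).Nonempty := by
                rw [Set.nonempty_iff_ne_empty]
                intro hempty
                have hAe : (A \ Xf s).ncard = A.ncard := by rw [hempty]; simp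
                omega
              have h1 := hmcl1 s hne
              have h2 := hSSsucc s
              omega
    rcases key N with h | h
    · exact h
    · exact ⟨N, by omega⟩
  obtain ⟨r, hrspec, hrmin⟩ : ∃ r, (N - w ≤ (A \ Xf r).ncard) ∧
      ∀ s, s < r → (A \ Xf s).ncard < N - w := by
    refine ⟨Nat.find hNexists, Nat.find_spec hNexists, ?_⟩
    intro s hs
    have := Nat.find_min hNexists hs
    omega
  have hw0 : 0 < w := by omega
  have hNbig : w + 1 ≤ N := by
    rw [hN]
    calc w + 1 ≤ w * w := by nlinarith
      _ = w ^ 2 := (sq w).symm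
      _ ≤ w ^ (t+2) := Nat.pow_le_pow_right (by omega) (by omega)
  have hr1 : 1 ≤ r := by
    by_contra h0
    have : r = 0 := by omega
    rw [this] at hrspec
    have : (A \ Xf 0).ncard = 0 := by
      have hh : A \ Xf 0 = ∅ := Set.diff_self
      rw [hh]; simp
    omega
  obtain ⟨rr, hrr⟩ : ∃ rr, r = rr + 1 := ⟨r - 1, by omega⟩
  have hSprev : (A \ Xf rr).ncard < N - w := hrmin rr (by omega)
  have hScur : (A \ Xf r).ncard ≤ N - 1 := by
    have h1 := hSSsucc rr
    have h2 := hmclw (Xf rr)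
    rw [← hrr] at h1
    omega
  have hSSle : ∀ s, (A \ Xf s).ncard ≤ s * w := by
    intro s; induction s with
    | zero =>
        have hh : A \ Xf 0 = ∅ := Set.diff_self
        rw [hh]; simp
    | succ s ih =>
        have h1 := hSSsucc s
        have h2 := hmclw (Xf s)
        have h3 : (s+1) * w = s * w + w := by ring
        omega
  set W : Set V := A \ Xf r with hWdef
  have hWfin : W.Finite := setFinite _
  set Wfin := hWfin.toFinset with hWfindef
  have hWcard : Wfin.card = W.ncard := (Set.ncard_eq_toFinset_card _ _).symm
  have hWA : W ⊆ A := Set.diff_subset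
  set ρ := Nat.choose (tt + w) w with hrhodef
  have hrhobound : ρ + 1 ≤ 2 * w ^ tt := rho_bound tt w hw
  set pw := w ^ tt with hpw
  have hpw1 : 1 ≤ pw := Nat.one_le_pow _ _ hw0
  have hNeq : N = pw * w * w * w := by
    rw [hN, htt, hpw, show tt + 1 + 2 = tt + 3 from by omega, pow_add]
    ring
  have hrbig : pw * w * w ≤ r + 1 := by
    have h1 : W.ncard ≤ r * w := hSSle r
    have h2 : N ≤ r * w + w := by omega
    have h3 : pw * w * w * w ≤ (r+1) * w := by
      rw [hNeq] at h2
      calc pw*w*w*w ≤ r*w + w := h2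
        _ = (r+1)*w := by ring
    exact Nat.le_of_mul_le_mul_right h3 hw0
  have hkey : w * ρ < r := by
    have k1 : w * (ρ+1) ≤ w * (2 * pw) := Nat.mul_le_mul_left w hrhobound
    have k2 : w * (2 * pw) ≤ pw * w * w := by
      calc w*(2*pw) = 2*(pw*w) := by ring
        _ ≤ w*(pw*w) := Nat.mul_le_mul_right _ hw
        _ = pw*w*w := by ring
    have k3 : w * ρ + w ≤ pw * w * w := by
      have hh : w * (ρ+1) = w*ρ + w := by ring
      omega
    omega
  set Y : Set V := {b | b ∈ B ∧ (Wfin.filter (fun x => ¬ F.Adj b x)).card < ρ} with hYdef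
  have hYB : Y ⊆ B := fun b hb => hb.1
  have hDsW : ∀ s, s < r → (↑(mcl (Xf s)) : Set V) ⊆ W := by
    intro s hs x hx
    refine ⟨hXfA s (hmclsub _ hx), ?_⟩
    intro hxr
    have h1 : Xf r ⊆ Xf (s+1) := hXfanti (s+1) r hs
    have h2 := h1 hxr
    rw [hXfsucc] at h2
    exact h2.2 hx
  have hDdisj : ∀ s s', s < s' → Disjoint (mcl (Xf s)) (mcl (Xf s')) := by
    intro s s' hss'
    rw [Finset.disjoint_left]
    intro x hx hx'
    have h1 : (Xf s') ⊆ Xf (s+1) := hXfanti (s+1) s' hss'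
    have h2 := h1 (hmclsub _ hx')
    rw [hXfsucc] at h2
    exact h2.2 hx
  have hYclique : (F.induce Y).cliqueNum + (F.induce (Xf rr)).cliqueNum ≤ F.cliqueNum := by
    obtain ⟨K, hKY, hKcl, hKcard⟩ := exists_maxClique (F := F) Y
    rcases Finset.eq_empty_or_nonempty K with hKe | hKne
    · rw [← hKcard, hKe]
      simpa using cliqueNum_induce_le (F := F) (Xf rr)
    · have hKw : K.card ≤ w := le_trans (IsClique.card_le_cliqueNum (tc := hKcl)) hclique
      have hgood : ∃ s, s < r ∧ ∀ b ∈ K, ∀ x ∈ mcl (Xf s), F.Adj b x := by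
        by_contra hcon
        push_neg at hcon
        have hwit : ∀ s : Fin r, ∃ x : V, x ∈ mcl (Xf s.1) ∧ ∃ b ∈ K, ¬ F.Adj b x := by
          intro s
          obtain ⟨b, hb, x, hx, hnadj⟩ := hcon s.1 s.2
          exact ⟨x, hx, b, hb, hnadj⟩
        choose wit hwit1 hwit2 using hwit
        set NN := Wfin.filter (fun x => ∃ b ∈ K, ¬ F.Adj b x) with hNN
        have hwitmem : ∀ s : Fin r, wit s ∈ NN := by
          intro s
          rw [hNN, Finset.mem_filter]
          refine ⟨?_, hwit2 s⟩
          rw [hWfindef, Set.Finite.mem_toFinset]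
          exact hDsW s.1 s.2 (hwit1 s)
        have hinj : Function.Injective wit := by
          intro s s' h
          by_contra hne
          have hne' : s.1 ≠ s'.1 := fun hh => hne (Fin.ext hh)
          rcases Nat.lt_or_ge s.1 s'.1 with hlt | hge
          · exact Finset.disjoint_left.mp (hDdisj s.1 s'.1 hlt) (hwit1 s) (h ▸ hwit1 s')
          · have hlt : s'.1 < s.1 := by omega
            exact Finset.disjoint_left.mp (hDdisj s'.1 s.1 hlt) (hwit1 s') (h.symm ▸ hwit1 s)
        have hcard1 : r ≤ NN.card := by
          have hh := Finset.card_le_card_of_injOn (s := (Finset.univ : Finset (Fin r)))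
            (t := NN) wit (fun a _ => hwitmem a) hinj.injOn
          simpa using hh
        have hcard2 : NN.card < r := by
          have hsub : NN ⊆ K.biUnion (fun b => Wfin.filter (fun x => ¬ F.Adj b x)) := by
            intro x hx
            rw [hNN, Finset.mem_filter] at hx
            obtain ⟨hxW, b, hb, hnadj⟩ := hx
            rw [Finset.mem_biUnion]
            exact ⟨b, hb, Finset.mem_filter.mpr ⟨hxW, hnadj⟩⟩
          have h1 : NN.card ≤ ∑ b ∈ K, (Wfin.filter (fun x => ¬ F.Adj b x)).card :=
            le_trans (Finset.card_le_card hsub) Finset.card_biUnion_le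
          have h3 : ∑ b ∈ K, (Wfin.filter (fun x => ¬ F.Adj b x)).card < K.card * ρ := by
            have hh : (∑ b ∈ K, (Wfin.filter (fun x => ¬ F.Adj b x)).card) < ∑ _b ∈ K, ρ :=
              Finset.sum_lt_sum_of_nonempty hKne (fun b hb => (hKY hb).2)
            rw [Finset.sum_const, smul_eq_mul] at hh
            exact hh
          have h4 : K.card * ρ ≤ w * ρ := Nat.mul_le_mul_right _ hKw
          omega
        omega
      obtain ⟨s, hsr, hsgood⟩ := hgood
      have hdisjKD : Disjoint K (mcl (Xf s)) := by
        rw [Finset.disjoint_left]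
        intro x hxK hxD
        have hxB : x ∈ B := hYB (hKY hxK)
        have hxA : x ∈ A := hXfA s (hmclsub _ hxD)
        exact (hB hxB) hxA
      have huc : F.IsClique ((K ∪ mcl (Xf s) : Finset V) : Set V) := by
        rw [Finset.coe_union]
        intro x hx y hy hne
        rcases hx with hxK | hxD <;> rcases hy with hyK | hyD
        · exact hKcl hxK hyK hne
        · exact hsgood x hxK y hyD
        · exact (hsgood y hyK x hxD).symm
        · exact hmclclique _ hxD hyD hne
      have hucard : K.card + (mcl (Xf s)).card ≤ F.cliqueNum := by
        have h1 := IsClique.card_le_cliqueNum (tc := huc)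
        rwa [Finset.card_union_of_disjoint hdisjKD] at h1
      have hmono : (F.induce (Xf rr)).cliqueNum ≤ (mcl (Xf s)).card := by
        rw [hmclcard]
        exact cliqueNum_induce_mono (hXfanti s rr (by omega))
      omega
  by_cases hchi : chiSet F (B \ Y) < q
  · left
    refine ⟨Xf rr, Y, hXfA rr, hYB, by omega, by omega, hchi⟩
  · right
    push_neg at hchi
    set Pfam := (Wfin.powersetCard t).filter
      (fun P => ∀ u ∈ P, ∀ v ∈ P, ¬ F.Adj u v) with hPdef
    set Qf : Finset V → Set V := fun P => {b | b ∈ B \ Y ∧ ∀ p ∈ P, ¬ F.Adj b p} with hQdef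
    have hcover : (B \ Y) ⊆ ⋃ P ∈ Pfam, Qf P := by
      intro b hb
      have hbB : b ∈ B := hb.1
      have hbY : b ∉ Y := hb.2
      have hbig : Nat.choose (tt + w) w ≤ (Wfin.filter (fun x => ¬ F.Adj b x)).card := by
        by_contra hsmall
        exact hbY ⟨hbB, by omega⟩
      obtain ⟨P, hPsub, hPcard, hPstab⟩ := es_ramsey (F := F) (tt + w) w tt
        (Wfin.filter (fun x => ¬ F.Adj b x)) rfl
        (fun K _ hKcl => le_trans (IsClique.card_le_cliqueNum (tc := hKcl)) hclique)
        hbig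
      have hPmem : P ∈ Pfam := by
        rw [hPdef, Finset.mem_filter, Finset.mem_powersetCard]
        refine ⟨⟨hPsub.trans (Finset.filter_subset _ _), ?_⟩, hPstab⟩
        rw [hPcard, htt]
      refine Set.mem_biUnion hPmem ?_
      refine ⟨hb, ?_⟩
      intro p hp
      have hh := hPsub hp
      rw [Finset.mem_filter] at hh
      exact hh.2
    have h1 : q ≤ ∑ P ∈ Pfam, chiSet F (Qf P) :=
      le_trans hchi (le_trans (chiSet_mono hcover) (chiSet_biUnion_le Pfam Qf))
    have hPne : Pfam.Nonempty := by
      rcases Finset.eq_empty_or_nonempty Pfam with he | hne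
      · rw [he] at h1; simp at h1; omega
      · exact hne
    obtain ⟨P₀, hP₀mem, hP₀max⟩ := Finset.exists_max_image Pfam (fun P => chiSet F (Qf P)) hPne
    have h2 : q ≤ Pfam.card * chiSet F (Qf P₀) := by
      calc q ≤ ∑ P ∈ Pfam, chiSet F (Qf P) := h1
        _ ≤ ∑ _P ∈ Pfam, chiSet F (Qf P₀) := Finset.sum_le_sum (fun P hP => hP₀max P hP)
        _ = Pfam.card * chiSet F (Qf P₀) := by rw [Finset.sum_const, smul_eq_mul]
    have hWle : Wfin.card ≤ N := by
      rw [hWcard]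
      have : W.ncard ≤ N - 1 := hScur
      omega
    have hPcardle : Pfam.card ≤ N ^ t := by
      calc Pfam.card ≤ (Wfin.powersetCard t).card :=
            Finset.card_le_card (Finset.filter_subset _ _)
        _ = Nat.choose Wfin.card t := by rw [Finset.card_powersetCard]
        _ ≤ Wfin.card ^ t := nat_choose_le_pow t _
        _ ≤ N ^ t := Nat.pow_le_pow_left hWle t
    have hP₀' := hP₀mem
    rw [hPdef, Finset.mem_filter, Finset.mem_powersetCard] at hP₀'
    refine ⟨↑P₀, Qf P₀, ?_, ?_, ?_, ?_, ?_, ?_⟩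
    · intro x hx
      have hh := hP₀'.1.1 (by exact_mod_cast hx)
      rw [hWfindef, Set.Finite.mem_toFinset] at hh
      exact hWA hh
    · exact fun b hb => hb.1.1
    · intro u hu v hv
      exact hP₀'.2 u (by exact_mod_cast hu) v (by exact_mod_cast hv)
    · rw [Set.ncard_coe_finset]; exact hP₀'.1.2
    · intro a ha b hb
      exact fun h => hb.2 a (by exact_mod_cast ha) h.symm
    · have hNt : N ^ t = w ^ (t * (t+2)) := by rw [hN, ← pow_mul, Nat.mul_comm]
      calc q ≤ Pfam.card * chiSet F (Qf P₀) := h2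
        _ ≤ N ^ t * chiSet F (Qf P₀) := Nat.mul_le_mul_right _ hPcardle
        _ = chiSet F (Qf P₀) * w ^ (t * (t+2)) := by rw [hNt]; ring
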